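/- Let K be a centerless normal subgroup of G with quotient ρ : G → Q and induced homomorphism θ : Q → Out(K). If there exists q ≠ 1 in FC(Q) with θ(q) = 1, then G is not icc. More precisely, there is a lift q̄ of q in G centralizing K whose centralizer in G contains ρ⁻¹(Z_Q(q)) and hence has finite index in G. -/

import Mathlib

def IsICC (G : Type*) [Group G] : Prop :=
  Nontrivial G ∧ ∀ g : G, g ≠ 1 → {h : G | IsConj g h}.Infinite

/-- The subgroup of inner automorphisms of K. -/
def Inn (K : Type*) [Group K] : Subgroup (MulAut K) := (MulAut.conj : K →* MulAut K).range

instance Inn.normal (K : Type*) [Group K] : (Inn K).Normal := by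
  constructor
  rintro x ⟨k, rfl⟩ φ
  refine ⟨φ k, ?_⟩
  ext h
  simp [MulAut.conj_apply, map_mul, mul_assoc]

/-- The outer automorphism group of K. -/
def Out (K : Type*) [Group K] := MulAut K ⧸ Inn K

instance (K : Type*) [Group K] : Group (Out K) :=
  inferInstanceAs (Group (MulAut K ⧸ Inn K))


lemma centralizer_index_eq_ncard {G : Type*} [Group G] (g : G) :
    (Subgroup.centralizer ({g} : Set G)).index = {h | IsConj g h}.ncard := by
  have h2 : MulAction.orbit (ConjAct G) g = {h | IsConj g h} := by
    ext h
    simp only [MulAction.mem_orbit_iff, Set.mem_setOf_eq, isConj_iff, ConjAct.smul_def]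
    constructor
    · rintro ⟨c, rfl⟩; exact ⟨ConjAct.ofConjAct c, rfl⟩
    · rintro ⟨c, rfl⟩; exact ⟨ConjAct.toConjAct c, rfl⟩
  rw [Subgroup.centralizer_eq_comap_stabilizer]
  exact (Subgroup.index_comap_of_surjective (f := ConjAct.toConjAct.toMonoidHom)
    (H := MulAction.stabilizer (ConjAct G) g) (hf := ConjAct.toConjAct.surjective)).trans (by rw [MulAction.index_stabilizer, h2])

lemma conjClass_finite_iff {G : Type*} [Group G] (g : G) :
    {h | IsConj g h}.Finite ↔ (Subgroup.centralizer ({g} : Set G)).FiniteIndex := by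
  constructor
  · intro hf
    refine ⟨?_⟩
    rw [centralizer_index_eq_ncard]
    exact ((Set.ncard_pos hf).mpr ⟨g, IsConj.refl g⟩).ne'
  · intro ⟨h⟩
    by_contra hinf
    rw [centralizer_index_eq_ncard, Set.Infinite.ncard hinf] at h
    exact h rfl

/-- If q ≠ 1 in FC(Q) has θ(q) = 1 (with K centerless normal in G), then G is not icc:
there is a lift q̄ of q centralizing K whose centralizer contains ρ⁻¹(Z_Q(q)),
hence has finite index in G. -/
theorem not_icc_of_ker_theta_on_FC {G : Type*} [Group G]
    (K : Subgroup G) [K.Normal] (hZ : Subgroup.center K = ⊥)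
    (π : G →* MulAut K)
    (hπ : ∀ (g : G) (k : K), ((π g k : K) : G) = g * (k : G) * g⁻¹)
    (θ : G ⧸ K →* Out K)
    (hθ : ∀ g : G, θ (QuotientGroup.mk g) = QuotientGroup.mk (π g))
    (q : G ⧸ K) (hq : q ≠ 1)
    (hqFC : {r : G ⧸ K | IsConj q r}.Finite)
    (hker : θ q = 1) :
    (¬ IsICC G) ∧
    ∃ qbar : G, (QuotientGroup.mk qbar : G ⧸ K) = q ∧
      (∀ k ∈ K, Commute qbar k) ∧
      Subgroup.comap (QuotientGroup.mk' K) (Subgroup.centralizer {q}) ≤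
        Subgroup.centralizer {qbar} ∧
      (Subgroup.centralizer {qbar}).FiniteIndex := by
  obtain ⟨g, rfl⟩ := QuotientGroup.mk_surjective q
  rw [hθ g] at hker
  obtain ⟨k, hk⟩ : π g ∈ Inn K := (QuotientGroup.eq_one_iff (π g)).mp hker
  set qbar : G := g * (↑k)⁻¹ with hqbar
  have key : ∀ x : K, g * (↑x : G) * g⁻¹ = ↑k * ↑x * (↑k : G)⁻¹ := by
    intro x
    have h := hπ g x
    rw [← hk] at h
    simpa [MulAut.conj_apply] using h.symm
  have hmk : (QuotientGroup.mk qbar : G ⧸ K) = QuotientGroup.mk g := by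
    rw [hqbar]
    refine QuotientGroup.eq.mpr ?_
    show (g * (↑k)⁻¹)⁻¹ * g ∈ K
    simp [mul_assoc, k.2]
  have hcomm : ∀ m ∈ K, Commute qbar m := by
    intro m hm
    have hx : (↑k : G)⁻¹ * m * ↑k ∈ K := K.mul_mem (K.mul_mem (K.inv_mem k.2) hm) k.2
    have h1 : qbar * m * qbar⁻¹ = m := by
      calc qbar * m * qbar⁻¹ = g * ((↑k : G)⁻¹ * m * ↑k) * g⁻¹ := by rw [hqbar]; group
        _ = ↑k * ((↑k : G)⁻¹ * m * ↑k) * (↑k : G)⁻¹ := key ⟨_, hx⟩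
        _ = m := by group
    exact mul_inv_eq_iff_eq_mul.mp h1
  have hconj : ∀ m ∈ K, qbar * m * qbar⁻¹ = m := fun m hm =>
    mul_inv_eq_iff_eq_mul.mpr (hcomm m hm)
  -- centralizer inclusion
  have hle : Subgroup.comap (QuotientGroup.mk' K) (Subgroup.centralizer {QuotientGroup.mk g}) ≤
      Subgroup.centralizer {qbar} := by
    intro g' hg'
    rw [Subgroup.mem_comap] at hg'
    rw [Subgroup.mem_centralizer_iff] at hg' ⊢
    have hcent : (QuotientGroup.mk g : G ⧸ K) * QuotientGroup.mk g' =
        QuotientGroup.mk g' * QuotientGroup.mk g := hg' _ rfl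
    intro x hx
    rw [Set.mem_singleton_iff] at hx
    subst hx
    set u : G := g' * qbar * g'⁻¹ with hu
    have huconj : ∀ m ∈ K, u * m * u⁻¹ = m := by
      intro m hm
      have hm' : g'⁻¹ * m * g' ∈ K := by
        simpa using Subgroup.Normal.conj_mem ‹K.Normal› m hm g'⁻¹
      calc u * m * u⁻¹ = g' * (qbar * (g'⁻¹ * m * g') * qbar⁻¹) * g'⁻¹ := by rw [hu]; group
        _ = g' * (g'⁻¹ * m * g') * g'⁻¹ := by rw [hconj _ hm']
        _ = m := by group
    have hcK : u * qbar⁻¹ ∈ K := by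
      rw [← QuotientGroup.eq_one_iff]
      have : (QuotientGroup.mk u : G ⧸ K) = QuotientGroup.mk qbar := by
        have h2 : (QuotientGroup.mk u : G ⧸ K) =
            QuotientGroup.mk g' * QuotientGroup.mk qbar * (QuotientGroup.mk g')⁻¹ := by
          rw [hu]; rfl
        rw [h2, hmk, ← hcent]
        group
      calc (QuotientGroup.mk (u * qbar⁻¹) : G ⧸ K)
          = QuotientGroup.mk u * (QuotientGroup.mk qbar)⁻¹ := rfl
        _ = 1 := by rw [this]; group
    have hcZ : (⟨u * qbar⁻¹, hcK⟩ : K) ∈ Subgroup.center K := by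
      rw [Subgroup.mem_center_iff]
      intro x
      have hxc : Commute (u * qbar⁻¹) (↑x : G) := by
        have h1 : Commute u ↑x := by
          have := huconj ↑x x.2
          exact mul_inv_eq_iff_eq_mul.mp this
        have h2 : Commute qbar⁻¹ ↑x := (hcomm ↑x x.2).inv_left
        exact h1.mul_left h2 |>.symm |>.symm
      ext
      simpa [mul_comm] using hxc.symm.eq
    have hc1 : u * qbar⁻¹ = 1 := by
      rw [hZ] at hcZ
      simpa [Subgroup.mem_bot, Subtype.ext_iff] using hcZ
    have hueq : u = qbar := by
      rw [← mul_inv_eq_one]; exact hc1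
    have : g' * qbar * g'⁻¹ = qbar := hueq
    calc qbar * g' = g' * (g'⁻¹ * qbar * g') := by group
      _ = g' * qbar := by
          congr 1
          have := hueq
          rw [hu] at this
          calc g'⁻¹ * qbar * g' = g'⁻¹ * (g' * qbar * g'⁻¹) * g' := by rw [this]
            _ = qbar := by group
  -- finite index
  haveI hfq : (Subgroup.centralizer ({QuotientGroup.mk g} : Set (G ⧸ K))).FiniteIndex :=
    (conjClass_finite_iff _).mp hqFC
  haveI hfc : (Subgroup.comap (QuotientGroup.mk' K)
      (Subgroup.centralizer {QuotientGroup.mk g})).FiniteIndex := by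
    constructor
    rw [Subgroup.index_comap_of_surjective _ (QuotientGroup.mk'_surjective K)]
    exact hfq.index_ne_zero
  haveI hfin : (Subgroup.centralizer ({qbar} : Set G)).FiniteIndex :=
    Subgroup.finiteIndex_of_le hle
  have hqbarne : qbar ≠ 1 := by
    intro h
    apply hq
    rw [← hmk, h]
    rfl
  refine ⟨?_, qbar, hmk, fun m hm => hcomm m hm, hle, hfin⟩
  rintro ⟨-, hicc⟩
  exact (hicc qbar hqbarne) ((conjClass_finite_iff qbar).mpr hfin)
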